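/- For p ∈ [1, ∞), the expected squared ℓ2 norm of a uniform sample from the unit ℓp ball B_p^d ⊆ ℝ^d equals (d²/(d+2)) · Γ(d/p)Γ(3/p) / (Γ(1/p)Γ((d+2)/p)). -/

import Mathlib

open MeasureTheory Real Set Pointwise

private lemma integrable_comp_abs' {f : ℝ → ℝ}
    (hf0 : IntegrableOn f (Ioi 0)) :
    Integrable (fun x : ℝ => f |x|) := by
  have hf : IntegrableOn (fun x => f |x|) (Ioi 0) := by
    refine hf0.congr_fun (fun x hx => ?_) measurableSet_Ioi
    rw [abs_of_pos hx]
  have int_Iic : IntegrableOn (fun x ↦ f |x|) (Iic 0) := by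
    rw [← Measure.map_neg_eq_self (volume : Measure ℝ)]
    have m : MeasurableEmbedding fun x : ℝ => -x := (Homeomorph.neg ℝ).measurableEmbedding
    rw [m.integrableOn_map_iff]
    simp_rw [Function.comp_def, abs_neg, neg_preimage, neg_Iic, neg_zero]
    exact Iff.mpr integrableOn_Ici_iff_integrableOn_Ioi hf
  have h := int_Iic.union hf
  rwa [Iic_union_Ioi, integrableOn_univ] at h

private lemma int_h0 {p : ℝ} (hp : 1 ≤ p) :
    IntegrableOn (fun t : ℝ => exp (-t ^ p)) (Ioi 0) := by
  refine (integrableOn_rpow_mul_exp_neg_rpow (by norm_num : (-1:ℝ) < 0) (by linarith)).congr_fun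
    (fun x hx => ?_) measurableSet_Ioi
  simp only [rpow_zero, one_mul]

private lemma int_g0 {p : ℝ} (hp : 1 ≤ p) :
    Integrable (fun t : ℝ => exp (-|t| ^ p)) := by
  have h := integrable_comp_abs' (f := fun t => exp (-t ^ p)) (int_h0 hp)
  simpa using h

private lemma val_g0 {p : ℝ} (hp : 1 ≤ p) :
    ∫ t : ℝ, exp (-|t| ^ p) = 2 * Gamma (1 / p + 1) := by
  rw [integral_comp_abs (f := fun t => exp (-t ^ p)), integral_exp_neg_rpow (by linarith)]

private lemma int_h1 {p : ℝ} (hp : 1 ≤ p) :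
    IntegrableOn (fun t : ℝ => t ^ 2 * exp (-t ^ p)) (Ioi 0) := by
  refine (integrableOn_rpow_mul_exp_neg_rpow (by norm_num : (-1:ℝ) < 2) (by linarith)).congr_fun
    (fun x hx => ?_) measurableSet_Ioi
  norm_num [rpow_natCast x 2]

private lemma eq_g1 {p : ℝ} : (fun t : ℝ => t ^ 2 * exp (-|t| ^ p))
    = fun t : ℝ => (fun u : ℝ => u ^ 2 * exp (-u ^ p)) |t| := by
  ext t; simp only [sq_abs]

private lemma int_g1 {p : ℝ} (hp : 1 ≤ p) :
    Integrable (fun t : ℝ => t ^ 2 * exp (-|t| ^ p)) := by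
  rw [eq_g1]
  have h := integrable_comp_abs' (f := fun u : ℝ => u ^ 2 * exp (-u ^ p)) (int_h1 hp)
  simpa using h

private lemma val_g1 {p : ℝ} (hp : 1 ≤ p) :
    ∫ t : ℝ, t ^ 2 * exp (-|t| ^ p) = 2 * ((1 / p) * Gamma (3 / p)) := by
  rw [eq_g1, integral_comp_abs (f := fun u : ℝ => u ^ 2 * exp (-u ^ p))]
  rw [show (∫ x in Ioi (0:ℝ), x ^ 2 * exp (-x ^ p))
      = ∫ x in Ioi (0:ℝ), x ^ (2:ℝ) * exp (-x ^ p) from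
    setIntegral_congr_fun measurableSet_Ioi (fun x hx => by norm_num [rpow_natCast x 2]),
    integral_rpow_mul_exp_neg_rpow (by linarith) (by norm_num)]
  norm_num

private lemma term_eq {d : ℕ} {p : ℝ} (i : Fin d) (x : Fin d → ℝ) :
    (x i) ^ 2 * ∏ j, exp (-|x j| ^ p)
      = ∏ j, (if j = i then (x j) ^ 2 * exp (-|x j| ^ p) else exp (-|x j| ^ p)) := by
  rw [← Finset.mul_prod_erase Finset.univ
      (fun j => if j = i then (x j) ^ 2 * exp (-|x j| ^ p) else exp (-|x j| ^ p))
      (Finset.mem_univ i), if_pos rfl,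
    ← Finset.mul_prod_erase Finset.univ (fun j => exp (-|x j| ^ p)) (Finset.mem_univ i),
    ← mul_assoc]
  congr 1
  exact Finset.prod_congr rfl fun j hj => by rw [if_neg (Finset.mem_erase.mp hj).1]

private lemma integrand_eq {d : ℕ} {p : ℝ} (x : Fin d → ℝ) :
    (∑ i, (x i) ^ 2) * exp (-(∑ i, |x i| ^ p))
      = ∑ i, ∏ j, (if j = i then (x j) ^ 2 * exp (-|x j| ^ p) else exp (-|x j| ^ p)) := by
  rw [← Finset.sum_neg_distrib, exp_sum, Finset.sum_mul]
  exact Finset.sum_congr rfl fun i _ => term_eq i x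

private lemma J_int {d : ℕ} {p : ℝ} (hp : 1 ≤ p) :
    Integrable (fun x : Fin d → ℝ => (∑ i, (x i) ^ 2) * exp (-(∑ i, |x i| ^ p))) := by
  simp_rw [integrand_eq]
  refine integrable_finset_sum _ fun i _ => ?_
  refine Integrable.fintype_prod (𝕜 := ℝ)
    (f := fun j t => if j = i then t ^ 2 * exp (-|t| ^ p) else exp (-|t| ^ p)) fun j => ?_
  by_cases h : j = i <;> simp only [h, if_pos, if_neg, if_true, if_false]
  · exact int_g1 hp
  · exact int_g0 hp

private lemma J_val {d : ℕ} {p : ℝ} (hp : 1 ≤ p) :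
    ∫ x : Fin d → ℝ, (∑ i, (x i) ^ 2) * exp (-(∑ i, |x i| ^ p))
      = d * (2 * ((1 / p) * Gamma (3 / p))) * (2 * Gamma (1 / p + 1)) ^ (d - 1) := by
  simp_rw [integrand_eq]
  rw [integral_finset_sum (μ := volume) _ (fun i _ => Integrable.fintype_prod (𝕜 := ℝ)
    (f := fun j t => if j = i then t ^ 2 * exp (-|t| ^ p) else exp (-|t| ^ p)) fun j => by
      by_cases h : j = i <;> simp only [h, if_true, if_false] <;>
        [exact int_g1 hp; exact int_g0 hp])]
  have : ∀ i : Fin d,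
      (∫ x : Fin d → ℝ, ∏ j, (if j = i then (x j) ^ 2 * exp (-|x j| ^ p) else exp (-|x j| ^ p)))
        = (2 * ((1 / p) * Gamma (3 / p))) * (2 * Gamma (1 / p + 1)) ^ (d - 1) := by
    intro i
    rw [volume_pi, integral_fintype_prod_eq_prod (𝕜 := ℝ)
      (f := fun j t => if j = i then t ^ 2 * exp (-|t| ^ p) else exp (-|t| ^ p))]
    have : ∀ j : Fin d, (∫ t : ℝ, if j = i then t ^ 2 * exp (-|t| ^ p) else exp (-|t| ^ p))
        = if j = i then 2 * ((1 / p) * Gamma (3 / p)) else 2 * Gamma (1 / p + 1) := by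
      intro j
      by_cases h : j = i <;> simp only [h, if_true, if_false]
      · exact val_g1 hp
      · exact val_g0 hp
    simp_rw [this]
    rw [← Finset.mul_prod_erase Finset.univ _ (Finset.mem_univ i), if_pos rfl]
    congr 1
    rw [Finset.prod_congr rfl (fun j hj => if_neg (Finset.mem_erase.mp hj).1),
      Finset.prod_const, Finset.card_erase_of_mem (Finset.mem_univ i), Finset.card_univ,
      Fintype.card_fin]
  simp_rw [this, Finset.sum_const, Finset.card_univ, Fintype.card_fin, nsmul_eq_mul, mul_assoc]

private lemma scale_lemma {d : ℕ} {p : ℝ} (hp0 : 0 < p) {r : ℝ} (hr : 0 < r) :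
    ∫ x in {x : Fin d → ℝ | (∑ i, |x i| ^ p) < r ^ p}, (∑ i, (x i) ^ 2)
      = r ^ (d + 2) * ∫ x in {x : Fin d → ℝ | (∑ i, |x i| ^ p) < 1}, (∑ i, (x i) ^ 2) := by
  have hset : r • {x : Fin d → ℝ | (∑ i, |x i| ^ p) < 1}
      = {x : Fin d → ℝ | (∑ i, |x i| ^ p) < r ^ p} := by
    ext y
    rw [mem_smul_set_iff_inv_smul_mem₀ hr.ne']
    simp only [mem_setOf_eq, Pi.smul_apply, smul_eq_mul, abs_mul, abs_inv, abs_of_pos hr,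
      mul_rpow (inv_nonneg.mpr hr.le) (abs_nonneg _), inv_rpow hr.le, ← Finset.mul_sum,
      inv_mul_lt_iff₀ (rpow_pos_of_pos hr p), mul_one]
  have h := Measure.setIntegral_comp_smul_of_pos volume (fun x : Fin d → ℝ => ∑ i, (x i) ^ 2)
    {x : Fin d → ℝ | (∑ i, |x i| ^ p) < 1} hr
  simp only [Pi.smul_apply, smul_eq_mul, mul_pow, ← Finset.mul_sum, hset,
    Module.finrank_fintype_fun_eq_card, Fintype.card_fin, smul_eq_mul] at h
  rw [integral_const_mul] at h
  have h2 : (r : ℝ) ^ d ≠ 0 := by positivity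
  field_simp at h
  rw [show r ^ (d + 2) = r ^ d * r ^ 2 by ring, mul_assoc, ← h]
  ring

private lemma layer_cake {d : ℕ} {p : ℝ} (hp : 1 ≤ p) :
    ∫ x : Fin d → ℝ, (∑ i, (x i) ^ 2) * exp (-(∑ i, |x i| ^ p))
      = Gamma (((d : ℝ) + 2) / p + 1)
        * ∫ x in {x : Fin d → ℝ | (∑ i, |x i| ^ p) < 1}, (∑ i, (x i) ^ 2) := by
  have hp0 : (0 : ℝ) < p := by linarith
  set s : (Fin d → ℝ) → ℝ := fun x => ∑ i, |x i| ^ p with hs_def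
  set f : (Fin d → ℝ) → ℝ := fun x => ∑ i, (x i) ^ 2 with hf_def
  set q : ℝ := ((d : ℝ) + 2) / p with hq_def
  have hq : 0 < q := by positivity
  have hf_nonneg : ∀ x, 0 ≤ f x := fun x => Finset.sum_nonneg fun i _ => sq_nonneg _
  have hs_nonneg : ∀ x, 0 ≤ s x := fun x =>
    Finset.sum_nonneg fun i _ => rpow_nonneg (abs_nonneg _) _
  have hs_meas : Measurable s :=
    Finset.measurable_sum _ fun i _ => (measurable_pi_apply i).abs.pow_const p
  have hf_meas : Measurable f :=
    Finset.measurable_sum _ fun i _ => (measurable_pi_apply i).pow_const 2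
  set I : ℝ := ∫ x in {x : Fin d → ℝ | s x < 1}, f x with hI_def
  have hI_nonneg : 0 ≤ I :=
    setIntegral_nonneg (by exact measurableSet_lt hs_meas measurable_const)
      fun x _ => hf_nonneg x
  -- tail integral of exp
  have exp_tail : ∀ a : ℝ, (∫⁻ t in Ioi a, ENNReal.ofReal (exp (-t))) = .ofReal (exp (-a)) := by
    intro a
    rw [← ofReal_integral_eq_lintegral_ofReal ?_ (Filter.Eventually.of_forall fun t =>
      (exp_pos _).le), integral_exp_neg_Ioi]
    exact (exp_neg_integrableOn_Ioi a zero_lt_one).congr_fun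
      (fun x _ => by simp only [neg_one_mul]) measurableSet_Ioi
  -- the product-space kernel
  set S : Set ((Fin d → ℝ) × ℝ) := {z | s z.1 < z.2} with hS_def
  have hS : MeasurableSet S := measurableSet_lt (hs_meas.comp measurable_fst) measurable_snd
  set k : ((Fin d → ℝ) × ℝ) → ENNReal :=
    S.indicator fun z => ENNReal.ofReal (exp (-z.2)) * ENNReal.ofReal (f z.1) with hk_def
  have hk_meas : Measurable k := by
    refine Measurable.indicator ?_ hS
    exact (measurable_snd.neg.exp.ennreal_ofReal).mul
      ((hf_meas.comp measurable_fst).ennreal_ofReal)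
  -- step 1 : L = ∬ k
  have step1 : (∫⁻ x, ENNReal.ofReal (f x * exp (-(s x))))
      = ∫⁻ x, ∫⁻ t, k (x, t) := by
    refine lintegral_congr fun x => ?_
    have : ∀ t : ℝ, k (x, t) = (Ioi (s x)).indicator
        (fun t => ENNReal.ofReal (exp (-t)) * ENNReal.ofReal (f x)) t := by
      intro t
      simp only [hk_def, indicator_apply, hS_def, mem_setOf_eq, mem_Ioi]
    simp_rw [this]
    rw [lintegral_indicator measurableSet_Ioi _,
      lintegral_mul_const _ measurable_neg.exp.ennreal_ofReal, exp_tail,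
      ← ENNReal.ofReal_mul (exp_pos _).le]
    exact congrArg ENNReal.ofReal (mul_comm _ _)
  -- step 2 : swap
  have step2 : (∫⁻ x, ∫⁻ t, k (x, t)) = ∫⁻ t, ∫⁻ x, k (x, t) :=
    lintegral_lintegral_swap hk_meas.aemeasurable
  -- step 3 : inner integral
  have step3 : ∀ t : ℝ, (∫⁻ x, k (x, t))
      = ENNReal.ofReal (exp (-t)) * ∫⁻ x in {x | s x < t}, ENNReal.ofReal (f x) := by
    intro t
    have : ∀ x, k (x, t) = {x : Fin d → ℝ | s x < t}.indicator
        (fun x => ENNReal.ofReal (exp (-t)) * ENNReal.ofReal (f x)) x := by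
      intro x
      simp only [hk_def, indicator_apply, hS_def, mem_setOf_eq]
    simp_rw [this]
    rw [lintegral_indicator (measurableSet_lt hs_meas measurable_const) _,
      lintegral_const_mul _ hf_meas.ennreal_ofReal]
  -- step 4 : value of inner integral for positive t
  have step4 : ∀ t : ℝ, 0 < t → (∫⁻ x in {x | s x < t}, ENNReal.ofReal (f x))
      = ENNReal.ofReal ((t ^ ((1:ℝ)/p)) ^ (d + 2) * I) := by
    intro t ht
    set r : ℝ := t ^ ((1:ℝ)/p) with hr_def
    have hr : 0 < r := rpow_pos_of_pos ht _
    have hrp : r ^ p = t := by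
      rw [hr_def, ← rpow_mul ht.le, one_div, inv_mul_cancel₀ hp0.ne', rpow_one]
    have hsub : {x : Fin d → ℝ | s x < t} ⊆ univ.pi fun _ : Fin d => Icc (-r) r := by
      intro x hx i _
      have h1 : |x i| ^ p ≤ s x :=
        Finset.single_le_sum (fun j _ => rpow_nonneg (abs_nonneg _) _) (Finset.mem_univ i)
      have h2 : |x i| ≤ r := by
        by_contra hcon
        push_neg at hcon
        exact absurd (lt_of_le_of_lt h1 hx)
          (not_lt.mpr (hrp ▸ rpow_le_rpow hr.le hcon.le hp0.le))
      exact abs_le.mp h2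
    have hint : IntegrableOn f {x : Fin d → ℝ | s x < t} := by
      refine IntegrableOn.mono_set ?_ hsub
      refine ContinuousOn.integrableOn_compact (isCompact_univ_pi fun _ => isCompact_Icc) ?_
      exact (continuous_finset_sum _ fun i _ => (continuous_apply i).pow 2).continuousOn
    rw [← ofReal_integral_eq_lintegral_ofReal hint
      (Filter.Eventually.of_forall fun x => hf_nonneg x)]
    congr 1
    calc ∫ x in {x | s x < t}, f x = ∫ x in {x : Fin d → ℝ | s x < r ^ p}, f x := by rw [hrp]
      _ = r ^ (d + 2) * I := scale_lemma hp0 hr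
      _ = (t ^ ((1:ℝ)/p)) ^ (d + 2) * I := by rw [hr_def]
  -- assemble
  have hJ_nonneg : 0 ≤ ∫ x : Fin d → ℝ, f x * exp (-(s x)) :=
    integral_nonneg fun x => mul_nonneg (hf_nonneg x) (exp_pos _).le
  have key : ENNReal.ofReal (∫ x : Fin d → ℝ, f x * exp (-(s x)))
      = ENNReal.ofReal (Gamma (q + 1)) * ENNReal.ofReal I := by
    rw [ofReal_integral_eq_lintegral_ofReal (J_int hp)
      (Filter.Eventually.of_forall fun x => mul_nonneg (hf_nonneg x) (exp_pos _).le)]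
    rw [step1, step2]
    simp_rw [step3]
    have hzero : ∀ t : ℝ, t ≤ 0 → ({x : Fin d → ℝ | s x < t} = ∅) := by
      intro t ht
      ext x
      simp only [mem_setOf_eq, mem_empty_iff_false, iff_false, not_lt]
      exact le_trans ht (hs_nonneg x)
    have : (∫⁻ t, ENNReal.ofReal (exp (-t)) * ∫⁻ x in {x | s x < t}, ENNReal.ofReal (f x))
        = ∫⁻ t in Ioi 0, ENNReal.ofReal (exp (-t) * t ^ q) * ENNReal.ofReal I := by
      rw [← lintegral_indicator measurableSet_Ioi _]
      refine lintegral_congr fun t => ?_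
      by_cases ht : 0 < t
      · rw [indicator_of_mem (mem_Ioi.mpr ht), step4 t ht]
        have hpow : (t ^ ((1:ℝ)/p)) ^ (d + 2) = t ^ q := by
          rw [← rpow_natCast (t ^ ((1:ℝ)/p)) (d + 2), ← rpow_mul ht.le]
          congr 1
          push_cast [hq_def]
          ring
        rw [hpow, ENNReal.ofReal_mul (rpow_nonneg ht.le q),
          ENNReal.ofReal_mul (exp_pos _).le, mul_assoc]
      · rw [indicator_of_notMem (by simpa using ht), hzero t (not_lt.mp ht)]
        simp
    rw [this, lintegral_mul_const _ (by
      exact (measurable_neg.exp.mul (measurable_id.pow_const q)).ennreal_ofReal)]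
    congr 1
    rw [← ofReal_integral_eq_lintegral_ofReal]
    · rw [Gamma_eq_integral (by linarith : (0:ℝ) < q + 1)]
      congr 1
      refine setIntegral_congr_fun measurableSet_Ioi fun x hx => ?_
      rw [add_sub_cancel_right]
    · exact (Real.GammaIntegral_convergent (by linarith : (0:ℝ) < q + 1)).congr_fun
        (fun x hx => by rw [add_sub_cancel_right]) measurableSet_Ioi
    · refine (ae_restrict_iff' measurableSet_Ioi).mpr (Filter.Eventually.of_forall fun x hx => ?_)
      have := mem_Ioi.mp hx
      positivity
  have hGamma_pos : 0 < Gamma (q + 1) := Gamma_pos_of_pos (by linarith)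
  have := congrArg ENNReal.toReal key
  rwa [ENNReal.toReal_ofReal hJ_nonneg, ← ENNReal.ofReal_mul hGamma_pos.le,
    ENNReal.toReal_ofReal (mul_nonneg hGamma_pos.le hI_nonneg)] at this

theorem stmt_18 (d : ℕ) (hd : 0 < d) (p : ℝ) (hp : 1 ≤ p) :
    ⨍ x in {x : Fin d → ℝ | (∑ i, |x i| ^ p) ≤ 1}, (∑ i, (x i) ^ 2) ∂volume =
      ((d : ℝ) ^ 2 / ((d : ℝ) + 2)) *
        (Gamma ((d : ℝ) / p) * Gamma (3 / p)) / (Gamma (1 / p) * Gamma (((d : ℝ) + 2) / p)) := by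
  have hp0 : (0 : ℝ) < p := lt_of_lt_of_le zero_lt_one hp
  haveI : Nonempty (Fin d) := Fin.pos_iff_nonempty.mp hd
  have hd' : (0 : ℝ) < d := Nat.cast_pos.mpr hd
  set V : ℝ := (2 * Gamma (1 / p + 1)) ^ d / Gamma (d / p + 1) with hV_def
  have hG1 : 0 < Gamma (1 / p) := Gamma_pos_of_pos (by positivity)
  have hG3 : 0 < Gamma (3 / p) := Gamma_pos_of_pos (by positivity)
  have hGd : 0 < Gamma ((d : ℝ) / p) := Gamma_pos_of_pos (by positivity)
  have hGd2 : 0 < Gamma (((d : ℝ) + 2) / p) := Gamma_pos_of_pos (by positivity)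
  have hG1p : 0 < Gamma (1 / p + 1) := Gamma_pos_of_pos (by positivity)
  have hGdp : 0 < Gamma ((d : ℝ) / p + 1) := Gamma_pos_of_pos (by positivity)
  have hV_pos : 0 < V := by positivity
  -- volume of the closed ball
  have hset : {x : Fin d → ℝ | (∑ i, |x i| ^ p) ^ (1 / p : ℝ) ≤ 1}
      = {x : Fin d → ℝ | (∑ i, |x i| ^ p) ≤ 1} := by
    ext x
    have ha : (0 : ℝ) ≤ ∑ i, |x i| ^ p :=
      Finset.sum_nonneg fun i _ => rpow_nonneg (abs_nonneg _) _
    simp only [mem_setOf_eq]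
    constructor
    · intro h
      by_contra hcon
      push_neg at hcon
      have : 1 < (∑ i, |x i| ^ p) ^ ((1:ℝ)/p) :=
        (one_lt_rpow_iff_of_pos (by linarith)).mpr (Or.inl ⟨hcon, by positivity⟩)
      linarith
    · intro h
      exact rpow_le_one ha h (by positivity)
  have hvol_le : volume {x : Fin d → ℝ | (∑ i, |x i| ^ p) ≤ 1} = ENNReal.ofReal V := by
    rw [← hset, hV_def]
    have := volume_sum_rpow_le (Fin d) hp 1
    simpa [Fintype.card_fin, one_div] using this
  have hvol_lt : volume {x : Fin d → ℝ | (∑ i, |x i| ^ p) < 1} = ENNReal.ofReal V := by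
    rw [hV_def]
    have := volume_sum_rpow_lt_one (Fin d) hp
    simpa [Fintype.card_fin, one_div] using this
  -- a.e. equality of open and closed balls
  have hsub : {x : Fin d → ℝ | (∑ i, |x i| ^ p) < 1} ⊆ {x : Fin d → ℝ | (∑ i, |x i| ^ p) ≤ 1} := by
    intro x hx
    simp only [mem_setOf_eq] at *
    exact hx.le
  have hmeas_lt : MeasurableSet {x : Fin d → ℝ | (∑ i, |x i| ^ p) < 1} :=
    measurableSet_lt (Finset.measurable_sum _ fun i _ =>
      (measurable_pi_apply i).abs.pow_const p) measurable_const
  have hdiff : volume ({x : Fin d → ℝ | (∑ i, |x i| ^ p) ≤ 1}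
      \ {x : Fin d → ℝ | (∑ i, |x i| ^ p) < 1}) = 0 := by
    rw [measure_diff hsub hmeas_lt.nullMeasurableSet
      (by rw [hvol_lt]; exact ENNReal.ofReal_ne_top), hvol_le, hvol_lt, tsub_self]
  have hae : {x : Fin d → ℝ | (∑ i, |x i| ^ p) ≤ 1}
      =ᵐ[volume] {x : Fin d → ℝ | (∑ i, |x i| ^ p) < 1} := by
    rw [ae_eq_set]
    exact ⟨hdiff, by rw [diff_eq_empty.mpr hsub, measure_empty]⟩
  -- the value of I
  have hGq : 0 < Gamma (((d : ℝ) + 2) / p + 1) := Gamma_pos_of_pos (by positivity)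
  have hI : (∫ x in {x : Fin d → ℝ | (∑ i, |x i| ^ p) < 1}, (∑ i, (x i) ^ 2))
      = d * (2 * ((1 / p) * Gamma (3 / p))) * (2 * Gamma (1 / p + 1)) ^ (d - 1)
        / Gamma (((d : ℝ) + 2) / p + 1) := by
    have h := layer_cake (d := d) hp
    rw [J_val hp] at h
    rw [eq_div_iff hGq.ne', h]
    ring
  -- assemble
  rw [setAverage_eq, setIntegral_congr_set hae, hI, measureReal_def, hvol_le,
    ENNReal.toReal_ofReal hV_pos.le, smul_eq_mul]
  rw [Gamma_add_one (by positivity : ((d:ℝ) + 2) / p ≠ 0),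
    Gamma_add_one (by positivity : (1:ℝ) / p ≠ 0),
    Gamma_add_one (by positivity : (d:ℝ) / p ≠ 0)] at *
  rw [hV_def]
  have hpow : (2 * (1 / p * Gamma (1 / p))) ^ d
      = (2 * (1 / p * Gamma (1 / p))) * (2 * (1 / p * Gamma (1 / p))) ^ (d - 1) := by
    conv_lhs => rw [← Nat.succ_pred_eq_of_pos hd]
    rw [pow_succ', Nat.pred_eq_sub_one]
  rw [hpow]
  have hC_pos : (0:ℝ) < 2 * (1 / p * Gamma (1 / p)) := by positivity
  have hCpow_pos : (0:ℝ) < (2 * (1 / p * Gamma (1 / p))) ^ (d - 1) := by positivity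
  field_simp
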